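/- Let γ > 1. Define σ̃(x) for x ∈ [0,1] by σ̃(x) = (1 − log(1−x))^{-γ} for 0 ≤ x < 1 and σ̃(1) = 0. Then the cosine Fourier coefficients c_k = ∫₀¹ σ̃(x) cos((π/2) k x) dx satisfy |c_k| ≤ C k^{-1} (log k)^{-γ} for all k ≥ 2, for some constant C. -/

import Mathlib

open MeasureTheory Real

noncomputable def LL (x : ℝ) : ℝ := 1 - Real.log (1 - x)
noncomputable def ff (γ x : ℝ) : ℝ := LL x ^ (-γ)
noncomputable def f1 (γ x : ℝ) : ℝ := -γ * (LL x ^ (-γ - 1) * (1 - x)⁻¹)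
noncomputable def f2 (γ x : ℝ) : ℝ :=
  -γ * (((1 - x)⁻¹ * (-γ - 1) * LL x ^ (-γ - 2)) * (1 - x)⁻¹
        + LL x ^ (-γ - 1) * ((1 - x) ^ 2)⁻¹)
noncomputable def hh (γ x : ℝ) : ℝ := (1 - x)⁻¹ * LL x ^ (-γ - 1)
noncomputable def hh' (γ x : ℝ) : ℝ :=
  ((1 - x) ^ 2)⁻¹ * LL x ^ (-γ - 1)
    + (1 - x)⁻¹ * ((1 - x)⁻¹ * (-γ - 1) * LL x ^ (-γ - 2))
noncomputable def φφ (γ x : ℝ) : ℝ := LL x ^ (-γ - 1) * ((1 - x) ^ 2)⁻¹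

lemma one_le_LL {x : ℝ} (hx0 : 0 ≤ x) (hx1 : x < 1) : 1 ≤ LL x := by
  have h : Real.log (1 - x) ≤ 0 :=
    Real.log_nonpos (by linarith) (by linarith)
  simp only [LL]; linarith

lemma LL_pos {x : ℝ} (hx0 : 0 ≤ x) (hx1 : x < 1) : 0 < LL x :=
  lt_of_lt_of_le zero_lt_one (one_le_LL hx0 hx1)

lemma hasDerivAt_LL {x : ℝ} (hx1 : x < 1) : HasDerivAt LL (1 - x)⁻¹ x := by
  have h1 : HasDerivAt (fun y : ℝ => 1 - y) (-1) x := by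
    simpa using (hasDerivAt_id x).const_sub 1
  have h2 : HasDerivAt (fun y : ℝ => Real.log (1 - y)) (-1 / (1 - x)) x :=
    h1.log (sub_ne_zero.mpr (by linarith))
  have := h2.const_sub 1
  refine this.congr_deriv ?_
  field_simp

lemma hasDerivAt_ff (γ : ℝ) {x : ℝ} (hx0 : 0 ≤ x) (hx1 : x < 1) :
    HasDerivAt (ff γ) (f1 γ x) x := by
  have h := (hasDerivAt_LL hx1).rpow_const (p := -γ) (Or.inl (LL_pos hx0 hx1).ne')
  refine h.congr_deriv ?_
  simp only [f1]; ring

lemma hasDerivAt_LLpow (p : ℝ) {x : ℝ} (hx0 : 0 ≤ x) (hx1 : x < 1) :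
    HasDerivAt (fun y => LL y ^ p) ((1 - x)⁻¹ * p * LL x ^ (p - 1)) x :=
  (hasDerivAt_LL hx1).rpow_const (Or.inl (LL_pos hx0 hx1).ne')

lemma hasDerivAt_inv_one_sub {x : ℝ} (hx1 : x < 1) :
    HasDerivAt (fun y : ℝ => (1 - y)⁻¹) (((1 - x) ^ 2)⁻¹) x := by
  have h1 : HasDerivAt (fun y : ℝ => 1 - y) (-1) x := by
    simpa using (hasDerivAt_id x).const_sub 1
  have := h1.inv (sub_ne_zero.mpr (by linarith))
  refine this.congr_deriv ?_
  field_simp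

lemma hasDerivAt_f1 (γ : ℝ) {x : ℝ} (hx0 : 0 ≤ x) (hx1 : x < 1) :
    HasDerivAt (f1 γ) (f2 γ x) x := by
  have hp := hasDerivAt_LLpow (-γ - 1) hx0 hx1
  have hi := hasDerivAt_inv_one_sub hx1
  have h := (hp.mul hi).const_mul (-γ)
  refine h.congr_deriv ?_
  simp only [f2]
  ring_nf

lemma hasDerivAt_hh (γ : ℝ) {x : ℝ} (hx0 : 0 ≤ x) (hx1 : x < 1) :
    HasDerivAt (hh γ) (hh' γ x) x := by
  have hp := hasDerivAt_LLpow (-γ - 1 - 1) hx0 hx1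
  have hi := hasDerivAt_inv_one_sub hx1
  have h := hi.mul (hasDerivAt_LLpow (-γ - 1) hx0 hx1)
  refine h.congr_deriv ?_
  simp only [hh']
  ring_nf

lemma LL_mono {x y : ℝ} (hy : y < 1) (hxy : x ≤ y) : LL x ≤ LL y := by
  have := Real.log_le_log (by linarith : (0:ℝ) < 1 - y) (by linarith : 1 - y ≤ 1 - x)
  simp only [LL]; linarith

lemma abs_f2_le {γ : ℝ} (hγ : 1 < γ) {x : ℝ} (hx0 : 0 ≤ x) (hx1 : x < 1) :
    |f2 γ x| ≤ γ * (γ + 2) * φφ γ x := by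
  have hL := one_le_LL hx0 hx1
  have ha : LL x ^ (-γ - 2) ≤ LL x ^ (-γ - 1) :=
    Real.rpow_le_rpow_of_exponent_le hL (by linarith)
  have ha0 : 0 ≤ LL x ^ (-γ - 2) := Real.rpow_nonneg (by linarith) _
  have hb0 : 0 ≤ LL x ^ (-γ - 1) := Real.rpow_nonneg (by linarith) _
  have hc0 : 0 ≤ ((1 - x) ^ 2)⁻¹ := by positivity
  have hc : (1 - x)⁻¹ * (1 - x)⁻¹ = ((1 - x) ^ 2)⁻¹ := by rw [sq, mul_inv]
  have hf2 : f2 γ x = γ * (γ + 1) * (LL x ^ (-γ - 2) * ((1 - x) ^ 2)⁻¹)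
      - γ * (LL x ^ (-γ - 1) * ((1 - x) ^ 2)⁻¹) := by
    simp only [f2]; rw [← hc]; ring
  have h1 : γ * (γ + 1) * (LL x ^ (-γ - 2) * ((1 - x) ^ 2)⁻¹)
      ≤ γ * (γ + 1) * (LL x ^ (-γ - 1) * ((1 - x) ^ 2)⁻¹) :=
    mul_le_mul_of_nonneg_left (mul_le_mul_of_nonneg_right ha hc0) (by nlinarith)
  have h3 : 0 ≤ γ * (γ + 1) * (LL x ^ (-γ - 2) * ((1 - x) ^ 2)⁻¹) :=
    mul_nonneg (by nlinarith) (mul_nonneg ha0 hc0)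
  have h4 : 0 ≤ γ * (LL x ^ (-γ - 1) * ((1 - x) ^ 2)⁻¹) :=
    mul_nonneg (by linarith) (mul_nonneg hb0 hc0)
  rw [hf2, abs_le]
  constructor
  · simp only [φφ]; nlinarith
  · simp only [φφ]; nlinarith

lemma phi_le_two_hh' {γ : ℝ} (hγ : 1 < γ) {x : ℝ} (hx0 : 0 ≤ x) (hx1 : x < 1)
    (hLx : 2 * (γ + 1) ≤ LL x) : φφ γ x ≤ 2 * hh' γ x := by
  have hLpos := LL_pos hx0 hx1
  have ha0 : 0 ≤ LL x ^ (-γ - 2) := Real.rpow_nonneg (by linarith [one_le_LL hx0 hx1]) _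
  have hc0 : 0 ≤ ((1 - x) ^ 2)⁻¹ := by positivity
  have hc : (1 - x)⁻¹ * (1 - x)⁻¹ = ((1 - x) ^ 2)⁻¹ := by rw [sq, mul_inv]
  have hb : LL x ^ (-γ - 1) = LL x * LL x ^ (-γ - 2) := by
    rw [show (-γ - 1) = 1 + (-γ - 2) by ring, Real.rpow_add hLpos, Real.rpow_one]
  have hhh : hh' γ x = ((1 - x) ^ 2)⁻¹ * LL x ^ (-γ - 1)
      - (γ + 1) * (LL x ^ (-γ - 2) * ((1 - x) ^ 2)⁻¹) := by
    simp only [hh']; rw [← hc]; ring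
  have key : 2 * (γ + 1) * LL x ^ (-γ - 2) ≤ LL x ^ (-γ - 1) := by
    rw [hb]; exact mul_le_mul_of_nonneg_right hLx ha0
  simp only [φφ]
  rw [hhh]
  nlinarith [mul_le_mul_of_nonneg_right key hc0]

lemma continuousOn_LLpow (p : ℝ) {c b : ℝ} (hc : 0 ≤ c) (hb : b < 1) :
    ContinuousOn (fun x => LL x ^ p) (Set.Icc c b) := fun x hx =>
  ((hasDerivAt_LLpow p (hc.trans hx.1) (lt_of_le_of_lt hx.2 hb)).continuousAt).continuousWithinAt

lemma continuousOn_inv_one_sub {c b : ℝ} (hb : b < 1) :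
    ContinuousOn (fun x : ℝ => (1 - x)⁻¹) (Set.Icc c b) := fun x hx =>
  ((hasDerivAt_inv_one_sub (lt_of_le_of_lt hx.2 hb)).continuousAt).continuousWithinAt

lemma continuousOn_inv_sq {c b : ℝ} (hb : b < 1) :
    ContinuousOn (fun x : ℝ => ((1 - x) ^ 2)⁻¹) (Set.Icc c b) := by
  have : ∀ x ∈ Set.Icc c b, (1 - x)⁻¹ * (1 - x)⁻¹ = ((1 - x) ^ 2)⁻¹ := by
    intro x _; rw [sq, mul_inv]
  exact ContinuousOn.congr ((continuousOn_inv_one_sub hb).mul (continuousOn_inv_one_sub hb))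
    fun x hx => (this x hx).symm

lemma continuousOn_phi (γ : ℝ) {c b : ℝ} (hc : 0 ≤ c) (hb : b < 1) :
    ContinuousOn (φφ γ) (Set.Icc c b) :=
  (continuousOn_LLpow _ hc hb).mul (continuousOn_inv_sq hb)

lemma continuousOn_f1 (γ : ℝ) {c b : ℝ} (hc : 0 ≤ c) (hb : b < 1) :
    ContinuousOn (f1 γ) (Set.Icc c b) :=
  (continuousOn_const.mul ((continuousOn_LLpow _ hc hb).mul (continuousOn_inv_one_sub hb)))

lemma continuousOn_f2 (γ : ℝ) {c b : ℝ} (hc : 0 ≤ c) (hb : b < 1) :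
    ContinuousOn (f2 γ) (Set.Icc c b) :=
  continuousOn_const.mul
    ((((continuousOn_inv_one_sub hb).mul continuousOn_const).mul
        (continuousOn_LLpow _ hc hb)).mul (continuousOn_inv_one_sub hb) |>.add
      ((continuousOn_LLpow _ hc hb).mul (continuousOn_inv_sq hb)))

lemma continuousOn_hh' (γ : ℝ) {c b : ℝ} (hc : 0 ≤ c) (hb : b < 1) :
    ContinuousOn (hh' γ) (Set.Icc c b) :=
  ((continuousOn_inv_sq hb).mul (continuousOn_LLpow _ hc hb)).add
    ((continuousOn_inv_one_sub hb).mul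
      (((continuousOn_inv_one_sub hb).mul continuousOn_const).mul
        (continuousOn_LLpow _ hc hb)))

lemma phi_nonneg (γ : ℝ) {x : ℝ} (hx0 : 0 ≤ x) (hx1 : x < 1) : 0 ≤ φφ γ x :=
  mul_nonneg (Real.rpow_nonneg (le_of_lt (LL_pos hx0 hx1)) _) (by positivity)

lemma hh_nonneg (γ : ℝ) {x : ℝ} (hx0 : 0 ≤ x) (hx1 : x < 1) : 0 ≤ hh γ x :=
  mul_nonneg (inv_nonneg.mpr (by linarith)) (Real.rpow_nonneg (le_of_lt (LL_pos hx0 hx1)) _)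

lemma phi_small {γ : ℝ} (hγ : 1 < γ) {x : ℝ} (hx0 : 0 ≤ x)
    (hx : x ≤ 1 - Real.exp (-(2 * γ + 1))) : φφ γ x ≤ Real.exp (4 * γ + 2) := by
  have hexp : 0 < Real.exp (-(2 * γ + 1)) := Real.exp_pos _
  have hx1 : x < 1 := by linarith
  have h1 : Real.exp (-(2 * γ + 1)) ≤ 1 - x := by linarith
  have hsq : Real.exp (-(4 * γ + 2)) ≤ (1 - x) ^ 2 := by
    have := mul_le_mul h1 h1 (le_of_lt hexp) (by linarith)
    calc Real.exp (-(4 * γ + 2)) = Real.exp (-(2 * γ + 1)) * Real.exp (-(2 * γ + 1)) := by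
          rw [← Real.exp_add]; ring_nf
      _ ≤ (1 - x) * (1 - x) := this
      _ = (1 - x) ^ 2 := (sq _).symm
  have h2 : ((1 - x) ^ 2)⁻¹ ≤ Real.exp (4 * γ + 2) := by
    rw [show (4 * γ + 2 : ℝ) = -(-(4 * γ + 2)) by ring, Real.exp_neg]
    exact inv_anti₀ (Real.exp_pos _) hsq
  have h3 : LL x ^ (-γ - 1) ≤ 1 :=
    Real.rpow_le_one_of_one_le_of_nonpos (one_le_LL hx0 hx1) (by linarith)
  calc φφ γ x ≤ 1 * ((1 - x) ^ 2)⁻¹ :=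
        mul_le_mul_of_nonneg_right h3 (by positivity)
    _ = ((1 - x) ^ 2)⁻¹ := one_mul _
    _ ≤ Real.exp (4 * γ + 2) := h2

lemma J_bound {γ : ℝ} (hγ : 1 < γ) {b : ℝ} (hb0 : 0 ≤ b) (hb1 : b < 1) :
    (∫ x in (0:ℝ)..b, φφ γ x) ≤ Real.exp (4 * γ + 2) + 2 * hh γ b := by
  set x₁ : ℝ := 1 - Real.exp (-(2 * γ + 1)) with hx₁def
  have hexp : 0 < Real.exp (-(2 * γ + 1)) := Real.exp_pos _
  have hexp1 : Real.exp (-(2 * γ + 1)) < 1 := Real.exp_lt_one_iff.mpr (by linarith)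
  have hx₁0 : 0 < x₁ := by simp only [hx₁def]; linarith
  have hx₁1 : x₁ < 1 := by simp only [hx₁def]; linarith
  have hhb : 0 ≤ hh γ b := hh_nonneg γ hb0 hb1
  rcases le_or_gt b x₁ with hbx | hxb
  · -- b ≤ x₁ : crude bound
    have hnorm : ‖∫ x in (0:ℝ)..b, φφ γ x‖ ≤ Real.exp (4 * γ + 2) * |b - 0| := by
      apply intervalIntegral.norm_integral_le_of_norm_le_const
      intro x hx
      rw [Set.uIoc_of_le hb0] at hx
      rw [Real.norm_eq_abs, abs_of_nonneg (phi_nonneg γ (le_of_lt hx.1) (lt_of_le_of_lt hx.2 hb1))]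
      exact phi_small hγ (le_of_lt hx.1) (le_trans hx.2 hbx)
    have : (∫ x in (0:ℝ)..b, φφ γ x) ≤ Real.exp (4 * γ + 2) * |b - 0| :=
      le_trans (le_abs_self _) hnorm
    have habs : |b - 0| ≤ 1 := by rw [sub_zero, abs_of_nonneg hb0]; linarith
    nlinarith [Real.exp_pos (4 * γ + 2)]
  · -- x₁ < b : split the integral
    have hint1 : IntervalIntegrable (φφ γ) volume 0 x₁ := by
      apply ContinuousOn.intervalIntegrable
      rw [Set.uIcc_of_le (le_of_lt hx₁0)]
      exact continuousOn_phi γ le_rfl hx₁1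
    have hint2 : IntervalIntegrable (φφ γ) volume x₁ b := by
      apply ContinuousOn.intervalIntegrable
      rw [Set.uIcc_of_le (le_of_lt hxb)]
      exact (continuousOn_phi γ le_rfl hb1).mono (Set.Icc_subset_Icc (le_of_lt hx₁0) le_rfl)
    have hsplit : (∫ x in (0:ℝ)..b, φφ γ x)
        = (∫ x in (0:ℝ)..x₁, φφ γ x) + ∫ x in x₁..b, φφ γ x :=
      (intervalIntegral.integral_add_adjacent_intervals hint1 hint2).symm
    have hI1 : (∫ x in (0:ℝ)..x₁, φφ γ x) ≤ Real.exp (4 * γ + 2) := by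
      have hnorm : ‖∫ x in (0:ℝ)..x₁, φφ γ x‖ ≤ Real.exp (4 * γ + 2) * |x₁ - 0| := by
        apply intervalIntegral.norm_integral_le_of_norm_le_const
        intro x hx
        rw [Set.uIoc_of_le (le_of_lt hx₁0)] at hx
        rw [Real.norm_eq_abs,
          abs_of_nonneg (phi_nonneg γ (le_of_lt hx.1) (lt_of_le_of_lt hx.2 hx₁1))]
        exact phi_small hγ (le_of_lt hx.1) hx.2
      have h1 : (∫ x in (0:ℝ)..x₁, φφ γ x) ≤ Real.exp (4 * γ + 2) * |x₁ - 0| :=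
        le_trans (le_abs_self _) hnorm
      have : |x₁ - 0| ≤ 1 := by rw [sub_zero, abs_of_nonneg (le_of_lt hx₁0)]; linarith
      nlinarith [Real.exp_pos (4 * γ + 2)]
    have hhd : ∀ x ∈ Set.uIcc x₁ b, HasDerivAt (hh γ) (hh' γ x) x := by
      intro x hx
      rw [Set.uIcc_of_le (le_of_lt hxb)] at hx
      exact hasDerivAt_hh γ (le_trans (le_of_lt hx₁0) hx.1) (lt_of_le_of_lt hx.2 hb1)
    have hinthh' : IntervalIntegrable (hh' γ) volume x₁ b := by
      apply ContinuousOn.intervalIntegrable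
      rw [Set.uIcc_of_le (le_of_lt hxb)]
      exact (continuousOn_hh' γ le_rfl hb1).mono (Set.Icc_subset_Icc (le_of_lt hx₁0) le_rfl)
    have hftc : (∫ x in x₁..b, hh' γ x) = hh γ b - hh γ x₁ :=
      intervalIntegral.integral_eq_sub_of_hasDerivAt hhd hinthh'
    have hmono : (∫ x in x₁..b, φφ γ x) ≤ ∫ x in x₁..b, 2 * hh' γ x := by
      apply intervalIntegral.integral_mono_on (le_of_lt hxb) hint2 (hinthh'.const_mul 2)
      intro x hx
      have hx0' : 0 ≤ x := le_trans (le_of_lt hx₁0) hx.1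
      have hx1' : x < 1 := lt_of_le_of_lt hx.2 hb1
      apply phi_le_two_hh' hγ hx0' hx1'
      have hLx₁ : LL x₁ = 2 * (γ + 1) := by
        simp only [LL, hx₁def, sub_sub_cancel, Real.log_exp]; ring
      calc 2 * (γ + 1) = LL x₁ := hLx₁.symm
        _ ≤ LL x := LL_mono hx1' hx.1
    have hI2 : (∫ x in x₁..b, φφ γ x) ≤ 2 * hh γ b := by
      have h2 : (∫ x in x₁..b, 2 * hh' γ x) = 2 * (hh γ b - hh γ x₁) := by
        rw [intervalIntegral.integral_const_mul, hftc]
      have hhx₁ : 0 ≤ hh γ x₁ := hh_nonneg γ (le_of_lt hx₁0) hx₁1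
      linarith [hmono.trans_eq h2]
    linarith [hsplit]

lemma abs_sub_le'' (a b : ℝ) : |a - b| ≤ |a| + |b| := by
  rw [sub_eq_add_neg]
  exact (abs_add_le _ _).trans_eq (by rw [abs_neg])

lemma f1_zero (γ : ℝ) : f1 γ 0 = -γ := by
  simp [f1, LL]

lemma main_part {γ : ℝ} (hγ : 1 < γ) {b ω : ℝ} (hb0 : 0 ≤ b) (hb1 : b < 1) (hω : 0 < ω) :
    |∫ x in (0:ℝ)..b, ff γ x * Real.cos (ω * x)|
      ≤ ff γ b * ω⁻¹ + |f1 γ b| * (ω⁻¹ * ω⁻¹) + γ * (ω⁻¹ * ω⁻¹)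
        + γ * (γ + 2) * (ω⁻¹ * ω⁻¹) * (Real.exp (4 * γ + 2) + 2 * hh γ b) := by
  have hωne : ω ≠ 0 := hω.ne'
  have hlin : ∀ x : ℝ, HasDerivAt (fun y : ℝ => ω * y) ω x := fun x => by
    simpa using (hasDerivAt_id x).const_mul ω
  have hvderiv : ∀ x ∈ Set.uIcc (0:ℝ) b,
      HasDerivAt (fun y => Real.sin (ω * y) / ω) (Real.cos (ω * x)) x := by
    intro x _
    have h2 := (hlin x).sin
    have h3 := h2.div_const ω
    refine h3.congr_deriv ?_
    field_simp
  have huderiv : ∀ x ∈ Set.uIcc (0:ℝ) b, HasDerivAt (ff γ) (f1 γ x) x := by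
    intro x hx
    rw [Set.uIcc_of_le hb0] at hx
    exact hasDerivAt_ff γ hx.1 (lt_of_le_of_lt hx.2 hb1)
  have hu'int : IntervalIntegrable (f1 γ) volume 0 b := by
    apply ContinuousOn.intervalIntegrable
    rw [Set.uIcc_of_le hb0]; exact continuousOn_f1 γ le_rfl hb1
  have hv'int : IntervalIntegrable (fun x => Real.cos (ω * x)) volume 0 b :=
    (Real.continuous_cos.comp (continuous_const.mul continuous_id)).intervalIntegrable _ _
  have hIBP1 := intervalIntegral.integral_mul_deriv_eq_deriv_mul huderiv hvderiv hu'int hv'int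
  have hv2deriv : ∀ x ∈ Set.uIcc (0:ℝ) b,
      HasDerivAt (fun y => -Real.cos (ω * y) / ω ^ 2) (Real.sin (ω * x) / ω) x := by
    intro x _
    have h2 := ((hlin x).cos).neg
    have h3 := h2.div_const (ω ^ 2)
    refine h3.congr_deriv ?_
    field_simp
  have hu2deriv : ∀ x ∈ Set.uIcc (0:ℝ) b, HasDerivAt (f1 γ) (f2 γ x) x := by
    intro x hx
    rw [Set.uIcc_of_le hb0] at hx
    exact hasDerivAt_f1 γ hx.1 (lt_of_le_of_lt hx.2 hb1)
  have hu2'int : IntervalIntegrable (f2 γ) volume 0 b := by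
    apply ContinuousOn.intervalIntegrable
    rw [Set.uIcc_of_le hb0]; exact continuousOn_f2 γ le_rfl hb1
  have hv2'int : IntervalIntegrable (fun x => Real.sin (ω * x) / ω) volume 0 b :=
    ((Real.continuous_sin.comp (continuous_const.mul continuous_id)).div_const ω).intervalIntegrable _ _
  have hIBP2 := intervalIntegral.integral_mul_deriv_eq_deriv_mul hu2deriv hv2deriv hu2'int hv2'int
  -- assemble the identity
  rw [hIBP2] at hIBP1
  have hsin0 : ff γ 0 * (Real.sin (ω * 0) / ω) = 0 := by
    simp
  rw [hsin0, sub_zero] at hIBP1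
  rw [hIBP1]
  -- bound the f2 integral
  have hφint : IntervalIntegrable (fun x => γ * (γ + 2) * (ω⁻¹ * ω⁻¹) * φφ γ x) volume 0 b := by
    apply ContinuousOn.intervalIntegrable
    rw [Set.uIcc_of_le hb0]
    exact continuousOn_const.mul (continuousOn_phi γ le_rfl hb1)
  have hA4 : |∫ x in (0:ℝ)..b, f2 γ x * (-Real.cos (ω * x) / ω ^ 2)|
      ≤ γ * (γ + 2) * (ω⁻¹ * ω⁻¹) * (Real.exp (4 * γ + 2) + 2 * hh γ b) := by
    have hpt : ∀ t ∈ Set.Ioc (0:ℝ) b, ‖f2 γ t * (-Real.cos (ω * t) / ω ^ 2)‖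
        ≤ γ * (γ + 2) * (ω⁻¹ * ω⁻¹) * φφ γ t := by
      intro t ht
      have ht0 : 0 ≤ t := le_of_lt ht.1
      have ht1 : t < 1 := lt_of_le_of_lt ht.2 hb1
      have h1 : |(-Real.cos (ω * t) / ω ^ 2)| ≤ ω⁻¹ * ω⁻¹ := by
        rw [abs_div, abs_neg, abs_of_pos (by positivity : (0:ℝ) < ω ^ 2)]
        rw [div_le_iff₀ (by positivity : (0:ℝ) < ω ^ 2)]
        calc |Real.cos (ω * t)| ≤ 1 := Real.abs_cos_le_one _
          _ = ω⁻¹ * ω⁻¹ * ω ^ 2 := by field_simp [sq]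
      rw [Real.norm_eq_abs, abs_mul]
      calc |f2 γ t| * |(-Real.cos (ω * t) / ω ^ 2)|
          ≤ (γ * (γ + 2) * φφ γ t) * (ω⁻¹ * ω⁻¹) :=
            mul_le_mul (abs_f2_le hγ ht0 ht1) h1 (abs_nonneg _)
              (mul_nonneg (by nlinarith) (phi_nonneg γ ht0 ht1))
        _ = γ * (γ + 2) * (ω⁻¹ * ω⁻¹) * φφ γ t := by ring
    have hae : ∀ᵐ t ∂(volume.restrict (Set.uIoc (0:ℝ) b)),
        ‖f2 γ t * (-Real.cos (ω * t) / ω ^ 2)‖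
          ≤ γ * (γ + 2) * (ω⁻¹ * ω⁻¹) * φφ γ t := by
      rw [Set.uIoc_of_le hb0]
      exact (ae_restrict_iff' measurableSet_Ioc).mpr (Filter.Eventually.of_forall hpt)
    have h := intervalIntegral.norm_integral_le_abs_of_norm_le hae hφint
    rw [Real.norm_eq_abs] at h
    refine h.trans ?_
    have hnn : 0 ≤ ∫ x in (0:ℝ)..b, γ * (γ + 2) * (ω⁻¹ * ω⁻¹) * φφ γ x := by
      apply intervalIntegral.integral_nonneg hb0
      intro u hu
      exact mul_nonneg (by positivity) (phi_nonneg γ hu.1 (lt_of_le_of_lt hu.2 hb1))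
    rw [abs_of_nonneg hnn, intervalIntegral.integral_const_mul]
    exact mul_le_mul_of_nonneg_left (J_bound hγ hb0 hb1) (by positivity)
  -- triangle inequality
  have htri : |ff γ b * (Real.sin (ω * b) / ω)
      - (f1 γ b * (-Real.cos (ω * b) / ω ^ 2) - f1 γ 0 * (-Real.cos (ω * 0) / ω ^ 2)
        - ∫ x in (0:ℝ)..b, f2 γ x * (-Real.cos (ω * x) / ω ^ 2))|
      ≤ |ff γ b * (Real.sin (ω * b) / ω)| + (|f1 γ b * (-Real.cos (ω * b) / ω ^ 2)|
        + (|f1 γ 0 * (-Real.cos (ω * 0) / ω ^ 2)|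
          + |∫ x in (0:ℝ)..b, f2 γ x * (-Real.cos (ω * x) / ω ^ 2)|)) := by
    have t1 := abs_sub_le'' (ff γ b * (Real.sin (ω * b) / ω))
      (f1 γ b * (-Real.cos (ω * b) / ω ^ 2) - f1 γ 0 * (-Real.cos (ω * 0) / ω ^ 2)
        - ∫ x in (0:ℝ)..b, f2 γ x * (-Real.cos (ω * x) / ω ^ 2))
    have t2 := abs_sub_le'' (f1 γ b * (-Real.cos (ω * b) / ω ^ 2)
        - f1 γ 0 * (-Real.cos (ω * 0) / ω ^ 2))
      (∫ x in (0:ℝ)..b, f2 γ x * (-Real.cos (ω * x) / ω ^ 2))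
    have t3 := abs_sub_le'' (f1 γ b * (-Real.cos (ω * b) / ω ^ 2))
      (f1 γ 0 * (-Real.cos (ω * 0) / ω ^ 2))
    linarith
  refine htri.trans ?_
  have e1 : |ff γ b * (Real.sin (ω * b) / ω)| ≤ ff γ b * ω⁻¹ := by
    rw [abs_mul]
    have hffb : 0 ≤ ff γ b := Real.rpow_nonneg (LL_pos hb0 hb1).le _
    rw [abs_of_nonneg hffb]
    apply mul_le_mul_of_nonneg_left _ hffb
    rw [abs_div, abs_of_pos hω, div_le_iff₀ hω]
    calc |Real.sin (ω * b)| ≤ 1 := Real.abs_sin_le_one _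
      _ = ω⁻¹ * ω := by field_simp
  have e2 : |f1 γ b * (-Real.cos (ω * b) / ω ^ 2)| ≤ |f1 γ b| * (ω⁻¹ * ω⁻¹) := by
    rw [abs_mul]
    apply mul_le_mul_of_nonneg_left _ (abs_nonneg _)
    rw [abs_div, abs_neg, abs_of_pos (by positivity : (0:ℝ) < ω ^ 2),
      div_le_iff₀ (by positivity : (0:ℝ) < ω ^ 2)]
    calc |Real.cos (ω * b)| ≤ 1 := Real.abs_cos_le_one _
      _ = ω⁻¹ * ω⁻¹ * ω ^ 2 := by field_simp [sq]
  have e3 : |f1 γ 0 * (-Real.cos (ω * 0) / ω ^ 2)| = γ * (ω⁻¹ * ω⁻¹) := by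
    rw [f1_zero, mul_zero, Real.cos_zero]
    rw [abs_mul, abs_neg, abs_of_pos (by linarith : (0:ℝ) < γ), abs_div]
    rw [abs_neg, abs_one, abs_of_pos (by positivity : (0:ℝ) < ω ^ 2)]
    field_simp [sq]
  linarith [e1, e2, e3.le, hA4]

lemma inv_sq_le_aux {γ K : ℝ} (hγ : 1 < γ) (hK : 2 ≤ K) :
    K⁻¹ * K⁻¹ ≤ γ ^ γ * (K⁻¹ * Real.log K ^ (-γ)) := by
  have hKpos : (0:ℝ) < K := by linarith
  have hlogpos : 0 < Real.log K := Real.log_pos (by linarith)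
  have h1 : Real.log K ≤ γ * K ^ (1/γ) := by
    have h := Real.log_le_rpow_div hKpos.le (by positivity : (0:ℝ) < 1/γ)
    calc Real.log K ≤ K ^ (1/γ) / (1/γ) := h
      _ = γ * K ^ (1/γ) := by field_simp
  have h2 : Real.log K ^ γ ≤ (γ * K ^ (1/γ)) ^ γ :=
    Real.rpow_le_rpow hlogpos.le h1 (by linarith)
  have h3 : (γ * K ^ (1/γ)) ^ γ = γ ^ γ * K := by
    rw [Real.mul_rpow (by linarith) (Real.rpow_nonneg hKpos.le _),
      ← Real.rpow_mul hKpos.le, show (1/γ) * γ = 1 by field_simp, Real.rpow_one]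
  have key : Real.log K ^ γ ≤ γ ^ γ * K := h2.trans_eq h3
  have hlgp : 0 < Real.log K ^ γ := Real.rpow_pos_of_pos hlogpos γ
  rw [Real.rpow_neg hlogpos.le]
  rw [show γ ^ γ * (K⁻¹ * (Real.log K ^ γ)⁻¹) = (γ ^ γ * K⁻¹) / (Real.log K ^ γ) by
    rw [div_eq_mul_inv]; ring]
  rw [le_div_iff₀ hlgp]
  have h4 : K⁻¹ * K⁻¹ * Real.log K ^ γ ≤ K⁻¹ * K⁻¹ * (γ ^ γ * K) :=
    mul_le_mul_of_nonneg_left key (by positivity)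
  have h5 : K⁻¹ * K⁻¹ * (γ ^ γ * K) = γ ^ γ * K⁻¹ := by
    field_simp
  linarith

set_option maxHeartbeats 1000000 in
theorem stmt8 (γ : ℝ) (hγ : 1 < γ) :
    ∃ C : ℝ, 0 < C ∧ ∀ k : ℕ, 2 ≤ k →
      |∫ x in (0:ℝ)..1,
          (if x < 1 then (1 - Real.log (1 - x)) ^ (-γ) else 0) *
            Real.cos (π / 2 * k * x)| ≤
        C * (k : ℝ)⁻¹ * (Real.log k) ^ (-γ) := by
  refine ⟨2 + γ + γ * γ ^ γ + γ * (γ + 2) * (Real.exp (4 * γ + 2) * γ ^ γ + 2), by positivity, ?_⟩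
  intro k hk
  set C : ℝ := 2 + γ + γ * γ ^ γ + γ * (γ + 2) * (Real.exp (4 * γ + 2) * γ ^ γ + 2) with hC
  set K : ℝ := (k : ℝ) with hKdef
  have hK2 : (2:ℝ) ≤ K := by rw [hKdef]; exact_mod_cast hk
  have hKpos : (0:ℝ) < K := by linarith
  have hKinv : (0:ℝ) < K⁻¹ := inv_pos.mpr hKpos
  have hKinv1 : K⁻¹ ≤ 1 := by
    rw [show (1:ℝ) = 1⁻¹ from inv_one.symm]
    exact inv_anti₀ one_pos (by linarith)
  set b : ℝ := 1 - K⁻¹ with hbdef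
  have hb0 : 0 ≤ b := by simp only [hbdef]; linarith
  have hb1 : b < 1 := by simp only [hbdef]; linarith
  set ω : ℝ := π / 2 * K with hωdef
  have hπ := Real.pi_gt_three
  have hπ2 : (1:ℝ) ≤ π / 2 := by linarith
  have hωK : K ≤ ω := by
    simp only [hωdef]
    calc K = 1 * K := (one_mul K).symm
      _ ≤ π / 2 * K := mul_le_mul_of_nonneg_right hπ2 hKpos.le
  have hωpos : 0 < ω := lt_of_lt_of_le hKpos hωK
  set F : ℝ → ℝ := fun x =>
    (if x < 1 then (1 - Real.log (1 - x)) ^ (-γ) else 0) * Real.cos (π / 2 * (k:ℝ) * x)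
    with hFdef
  have hFeq : ∀ x : ℝ, x < 1 → F x = ff γ x * Real.cos (ω * x) := by
    intro x hx
    simp only [hFdef, if_pos hx, ff, LL, hωdef, hKdef]
  -- continuity of the nice version
  have hcos : Continuous (fun x : ℝ => Real.cos (ω * x)) :=
    Real.continuous_cos.comp (continuous_const.mul continuous_id)
  -- integrability on [0, b]
  have int1 : IntervalIntegrable F volume 0 b := by
    apply ContinuousOn.intervalIntegrable
    rw [Set.uIcc_of_le hb0]
    apply ContinuousOn.congr ((continuousOn_LLpow (-γ) le_rfl hb1).mul hcos.continuousOn)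
    intro x hx
    exact hFeq x (lt_of_le_of_lt hx.2 hb1)
  -- pointwise bound on the tail
  have htail_pt : ∀ x ∈ Set.Ioc b 1, ‖F x‖ ≤ LL b ^ (-γ) := by
    intro x hx
    have hLLb := LL_pos hb0 hb1
    by_cases hx1 : x < 1
    · rw [hFeq x hx1, Real.norm_eq_abs, abs_mul]
      have hx0 : 0 ≤ x := le_trans hb0 hx.1.le
      have h1 : |ff γ x| = LL x ^ (-γ) := abs_of_nonneg (Real.rpow_nonneg (LL_pos hx0 hx1).le _)
      have h2 : LL x ^ (-γ) ≤ LL b ^ (-γ) :=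
        Real.rpow_le_rpow_of_nonpos hLLb (LL_mono hx1 hx.1.le) (by linarith)
      calc |ff γ x| * |Real.cos (ω * x)| ≤ |ff γ x| * 1 :=
            mul_le_mul_of_nonneg_left (Real.abs_cos_le_one _) (abs_nonneg _)
        _ = LL x ^ (-γ) := by rw [mul_one, h1]
        _ ≤ LL b ^ (-γ) := h2
    · have : F x = 0 := by simp only [hFdef, if_neg hx1, zero_mul]
      rw [this]; simpa using Real.rpow_nonneg hLLb.le (-γ)
  -- integrability on [b, 1]
  have int2 : IntervalIntegrable F volume b 1 := by
    rw [intervalIntegrable_iff, Set.uIoc_of_le hb1.le]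
    have hsm : AEStronglyMeasurable F (volume.restrict (Set.Ioc b 1)) := by
      rw [← Measure.restrict_congr_set Ioo_ae_eq_Ioc]
      apply ContinuousOn.aestronglyMeasurable _ measurableSet_Ioo
      have hffcont : ContinuousOn (fun x => ff γ x * Real.cos (ω * x)) (Set.Ioo b 1) := by
        apply ContinuousOn.mul _ hcos.continuousOn
        intro x hx
        exact ((hasDerivAt_ff γ (le_trans hb0 hx.1.le) hx.2).continuousAt).continuousWithinAt
      apply ContinuousOn.congr hffcont
      intro x hx
      exact hFeq x hx.2
    refine ⟨hsm, HasFiniteIntegral.restrict_of_bounded (C := LL b ^ (-γ)) measure_Ioc_lt_top ?_⟩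
    exact (ae_restrict_iff' measurableSet_Ioc).mpr (Filter.Eventually.of_forall htail_pt)
  have hsplit : (∫ x in (0:ℝ)..1, F x) = (∫ x in (0:ℝ)..b, F x) + ∫ x in b..(1:ℝ), F x :=
    (intervalIntegral.integral_add_adjacent_intervals int1 int2).symm
  -- tail bound
  have htail : |∫ x in b..(1:ℝ), F x| ≤ LL b ^ (-γ) * K⁻¹ := by
    have h := intervalIntegral.norm_integral_le_of_norm_le_const (C := LL b ^ (-γ)) (f := F)
      (a := b) (b := 1) ?_
    · rw [Real.norm_eq_abs] at h
      refine h.trans_eq ?_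
      congr 1
      rw [abs_of_nonneg (by simp only [hbdef]; linarith : (0:ℝ) ≤ 1 - b)]
      simp only [hbdef]; ring
    · intro x hx
      rw [Set.uIoc_of_le hb1.le] at hx
      exact htail_pt x hx
  -- main bound
  have hcong : (∫ x in (0:ℝ)..b, F x) = ∫ x in (0:ℝ)..b, ff γ x * Real.cos (ω * x) := by
    apply intervalIntegral.integral_congr
    intro x hx
    rw [Set.uIcc_of_le hb0] at hx
    exact hFeq x (lt_of_le_of_lt hx.2 hb1)
  have hmain := main_part hγ hb0 hb1 hωpos
  rw [← hcong] at hmain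
  -- explicit values
  have h1b : (1:ℝ) - b = K⁻¹ := by simp only [hbdef]; ring
  have hinvb : (1 - b)⁻¹ = K := by rw [h1b, inv_inv]
  have hLLb : LL b = 1 + Real.log K := by
    simp only [LL, hbdef, sub_sub_cancel, Real.log_inv]; ring
  have hlg : 0 < Real.log K := Real.log_pos (by linarith)
  set T : ℝ := 1 + Real.log K with hTdef
  have hT1 : 1 ≤ T := by simp only [hTdef]; linarith
  have hlgT : Real.log K ≤ T := by simp only [hTdef]; linarith
  set q : ℝ := Real.log K ^ (-γ) with hqdef
  have hq : 0 < q := Real.rpow_pos_of_pos hlg _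
  set p : ℝ := K⁻¹ with hpdef
  have hωinv : ω⁻¹ ≤ p := inv_anti₀ hKpos hωK
  have hωinv0 : 0 ≤ ω⁻¹ := inv_nonneg.mpr hωpos.le
  have hp0 : 0 ≤ p := hKinv.le
  have e1 : T ^ (-γ) ≤ q := Real.rpow_le_rpow_of_nonpos hlg hlgT (by linarith)
  have e2' : T ^ (-γ - 1) ≤ q :=
    (Real.rpow_le_rpow_of_exponent_le hT1 (by linarith)).trans e1
  have eT0 : 0 ≤ T ^ (-γ) := Real.rpow_nonneg (by linarith) _
  have eT1 : 0 ≤ T ^ (-γ - 1) := Real.rpow_nonneg (by linarith) _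
  have e3 : p * p ≤ γ ^ γ * (p * q) := inv_sq_le_aux hγ hK2
  have s1 : ω⁻¹ * ω⁻¹ ≤ p * p := mul_le_mul hωinv hωinv hωinv0 hp0
  have hpK : p * K = 1 := inv_mul_cancel₀ hKpos.ne'
  -- rewrite values in hmain
  have hffb : ff γ b = T ^ (-γ) := by rw [ff, hLLb]
  have hf1b : |f1 γ b| = γ * (T ^ (-γ - 1) * K) := by
    rw [f1, hLLb, hinvb, abs_mul, abs_neg, abs_of_pos (by linarith : (0:ℝ) < γ),
      abs_of_nonneg (mul_nonneg eT1 hKpos.le)]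
  have hhhb : hh γ b = K * T ^ (-γ - 1) := by
    rw [hh, hinvb, hLLb, mul_comm]
  rw [hffb, hf1b, hhhb] at hmain
  rw [hLLb] at htail
  -- term-by-term estimates
  have B1 : T ^ (-γ) * ω⁻¹ ≤ q * p := mul_le_mul e1 hωinv hωinv0 hq.le
  have Btail : T ^ (-γ) * K⁻¹ ≤ q * p := mul_le_mul e1 le_rfl hp0 hq.le
  have B2 : γ * (T ^ (-γ - 1) * K) * (ω⁻¹ * ω⁻¹) ≤ γ * (q * p) := by
    have step1 : γ * (T ^ (-γ - 1) * K) * (ω⁻¹ * ω⁻¹) ≤ γ * (T ^ (-γ - 1) * K) * (p * p) :=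
      mul_le_mul_of_nonneg_left s1
        (mul_nonneg (by linarith) (mul_nonneg eT1 hKpos.le))
    have step2 : γ * (T ^ (-γ - 1) * K) * (p * p) = γ * T ^ (-γ - 1) * p := by
      calc γ * (T ^ (-γ - 1) * K) * (p * p) = γ * T ^ (-γ - 1) * p * (p * K) := by ring
        _ = γ * T ^ (-γ - 1) * p := by rw [hpK, mul_one]
    have step3 : γ * T ^ (-γ - 1) * p ≤ γ * q * p :=
      mul_le_mul_of_nonneg_right (mul_le_mul_of_nonneg_left e2' (by linarith)) hp0
    calc γ * (T ^ (-γ - 1) * K) * (ω⁻¹ * ω⁻¹) ≤ γ * T ^ (-γ - 1) * p := step1.trans_eq step2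
      _ ≤ γ * q * p := step3
      _ = γ * (q * p) := by ring
  have B3 : γ * (ω⁻¹ * ω⁻¹) ≤ γ * (γ ^ γ * (p * q)) :=
    mul_le_mul_of_nonneg_left (s1.trans e3) (by linarith)
  have B4 : γ * (γ + 2) * (ω⁻¹ * ω⁻¹) * (Real.exp (4 * γ + 2) + 2 * (K * T ^ (-γ - 1)))
      ≤ γ * (γ + 2) * (Real.exp (4 * γ + 2) * (γ ^ γ * (p * q)) + 2 * (q * p)) := by
    have hE : 0 ≤ Real.exp (4 * γ + 2) := (Real.exp_pos _).le
    have hhb0 : 0 ≤ K * T ^ (-γ - 1) := mul_nonneg hKpos.le eT1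
    have stepa : (ω⁻¹ * ω⁻¹) * (Real.exp (4 * γ + 2) + 2 * (K * T ^ (-γ - 1)))
        ≤ (p * p) * (Real.exp (4 * γ + 2) + 2 * (K * T ^ (-γ - 1))) :=
      mul_le_mul_of_nonneg_right s1 (by linarith)
    have stepb : (p * p) * (Real.exp (4 * γ + 2) + 2 * (K * T ^ (-γ - 1)))
        = Real.exp (4 * γ + 2) * (p * p) + 2 * (p * T ^ (-γ - 1)) := by
      calc (p * p) * (Real.exp (4 * γ + 2) + 2 * (K * T ^ (-γ - 1)))
          = Real.exp (4 * γ + 2) * (p * p) + 2 * (p * T ^ (-γ - 1)) * (p * K) := by ring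
        _ = Real.exp (4 * γ + 2) * (p * p) + 2 * (p * T ^ (-γ - 1)) := by rw [hpK, mul_one]
    have stepc : Real.exp (4 * γ + 2) * (p * p) ≤ Real.exp (4 * γ + 2) * (γ ^ γ * (p * q)) :=
      mul_le_mul_of_nonneg_left e3 hE
    have stepd : 2 * (p * T ^ (-γ - 1)) ≤ 2 * (q * p) := by
      have := mul_le_mul_of_nonneg_left e2' hp0
      linarith
    have : (ω⁻¹ * ω⁻¹) * (Real.exp (4 * γ + 2) + 2 * (K * T ^ (-γ - 1)))
        ≤ Real.exp (4 * γ + 2) * (γ ^ γ * (p * q)) + 2 * (q * p) := by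
      calc (ω⁻¹ * ω⁻¹) * (Real.exp (4 * γ + 2) + 2 * (K * T ^ (-γ - 1)))
          ≤ Real.exp (4 * γ + 2) * (p * p) + 2 * (p * T ^ (-γ - 1)) := stepa.trans_eq stepb
        _ ≤ Real.exp (4 * γ + 2) * (γ ^ γ * (p * q)) + 2 * (q * p) := by linarith
    calc γ * (γ + 2) * (ω⁻¹ * ω⁻¹) * (Real.exp (4 * γ + 2) + 2 * (K * T ^ (-γ - 1)))
        = γ * (γ + 2) * ((ω⁻¹ * ω⁻¹) * (Real.exp (4 * γ + 2) + 2 * (K * T ^ (-γ - 1)))) := by ring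
      _ ≤ γ * (γ + 2) * (Real.exp (4 * γ + 2) * (γ ^ γ * (p * q)) + 2 * (q * p)) :=
          mul_le_mul_of_nonneg_left this (mul_nonneg (by linarith) (by linarith))
  -- put everything together
  have htotal : |∫ x in (0:ℝ)..1, F x| ≤ |∫ x in (0:ℝ)..b, F x| + |∫ x in b..(1:ℝ), F x| := by
    rw [hsplit]; exact abs_add_le _ _
  have hfinal : |∫ x in (0:ℝ)..1, F x| ≤ C * (p * q) := by
    have hsum := add_le_add (add_le_add (add_le_add (add_le_add B1 B2) B3) B4) Btail
    have : C * (p * q) = q * p + γ * (q * p) + γ * (γ ^ γ * (p * q))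
        + γ * (γ + 2) * (Real.exp (4 * γ + 2) * (γ ^ γ * (p * q)) + 2 * (q * p)) + q * p := by
      rw [hC]; ring
    rw [this]
    linarith [hmain, htail, htotal]
  calc |∫ x in (0:ℝ)..1, F x| ≤ C * (p * q) := hfinal
    _ = C * K⁻¹ * Real.log K ^ (-γ) := by rw [hpdef, hqdef]; ring
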